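/- In every generalized hypertree decomposition of a hypergraph H there exists a node u such that λ_u is a balanced separator of H, i.e., every connected component C of the subhypergraph of H induced on V(H) \ B(λ_u) satisfies |{e ∈ E(H) : e ∩ C ≠ ∅}| ≤ |E(H)| / 2. -/

import Mathlib

/-- A hypergraph: a finite set of vertices and a finite set of nonempty edges,
each of which is a subset of the vertex set. -/
structure HGraph (V : Type) where
  verts : Finset V
  edges : Finset (Finset V)
  nonempty_of_mem : ∀ e ∈ edges, e.Nonempty
  subset_verts : ∀ e ∈ edges, e ⊆ verts

variable {V : Type} [DecidableEq V]

/-- The data of a (generalized) hypertree decomposition: a finite rooted tree together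
with a bag `B_u` and an (integral) edge labelling `λ_u` (given as the finite set of edges
with value 1) for each node. -/
structure Decomp (V : Type) where
  n : ℕ
  tree : SimpleGraph (Fin n)
  root : Fin n
  bag : Fin n → Finset V
  cover : Fin n → Finset (Finset V)

/-- `u'` lies in the subtree `T_u` rooted at `u`: every path from the root to `u'`
passes through `u`. -/
def Decomp.desc (D : Decomp V) (u u' : Fin D.n) : Prop :=
  ∀ p : D.tree.Path D.root u', u ∈ p.1.support

/-- `D` is a generalized hypertree decomposition (GHD) of `H`:
the tree is a tree, every edge is covered by some bag, the set of nodes containing a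
given vertex is connected in the tree, each `λ_u` uses only edges of `H`, and
`B_u ⊆ B(λ_u)`. -/
def Decomp.IsGHD (H : HGraph V) (D : Decomp V) : Prop :=
  D.tree.IsTree ∧
  (∀ e ∈ H.edges, ∃ u, e ⊆ D.bag u) ∧
  (∀ v : V, (D.tree.induce {u | v ∈ D.bag u}).Preconnected) ∧
  (∀ u, D.cover u ⊆ H.edges) ∧
  (∀ u, D.bag u ⊆ (D.cover u).biUnion id)

/-- `D` is a hypertree decomposition (HD) of `H`: a GHD satisfying in addition the
special condition `V(T_u) ∩ B(λ_u) ⊆ B_u` for every node `u`. -/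
def Decomp.IsHD (H : HGraph V) (D : Decomp V) : Prop :=
  D.IsGHD H ∧
  ∀ u u', D.desc u u' → ∀ v ∈ D.bag u', v ∈ (D.cover u).biUnion id → v ∈ D.bag u

/-- The generalized hypertree width of `H`: the least `k` such that `H` has a GHD all of
whose labels `λ_u` have weight (cardinality) at most `k`. -/
noncomputable def ghw (H : HGraph V) : ℕ :=
  sInf {k | ∃ D : Decomp V, D.IsGHD H ∧ ∀ u, (D.cover u).card ≤ k}

/-- The hypertree width of `H`: the least `k` such that `H` has an HD all of whose
labels `λ_u` have weight (cardinality) at most `k`. -/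
noncomputable def hw (H : HGraph V) : ℕ :=
  sInf {k | ∃ D : Decomp V, D.IsHD H ∧ ∀ u, (D.cover u).card ≤ k}

/-- Connectivity in the subhypergraph of `H` induced on the vertex set `W`:
`x` and `y` are joined by a path each of whose steps stays in `W` and is witnessed by an
edge of `H` containing both endpoints. -/
def HConn (H : HGraph V) (W : Finset V) : V → V → Prop :=
  Relation.ReflTransGen (fun a b => a ∈ W ∧ b ∈ W ∧ ∃ e ∈ H.edges, a ∈ e ∧ b ∈ e)

/-- `C` is a connected component of the subhypergraph of `H` induced on `W`:
a maximal nonempty set of vertices of `W` that are pairwise connected within `W`. -/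
def IsComponent (H : HGraph V) (W : Finset V) (C : Finset V) : Prop :=
  C.Nonempty ∧ C ⊆ W ∧
  (∀ x ∈ C, ∀ y ∈ C, HConn H W x y) ∧
  (∀ x ∈ C, ∀ y ∈ W, HConn H W x y → y ∈ C)

set_option linter.unusedSectionVars false
set_option linter.unusedVariables false

open SimpleGraph

namespace BalSep
variable {α : Type} [DecidableEq α] {G : SimpleGraph α}

/-- reachable from a to b by a walk avoiding u -/
def AReach (G : SimpleGraph α) (u a b : α) : Prop := ∃ p : G.Walk a b, u ∉ p.support

lemma AReach.refl {u a : α} (h : a ≠ u) : AReach G u a a :=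
  ⟨Walk.nil, by simpa using (Ne.symm h)⟩

lemma AReach.symm {u a b : α} (h : AReach G u a b) : AReach G u b a := by
  obtain ⟨p, hp⟩ := h
  exact ⟨p.reverse, by simpa [Walk.support_reverse] using hp⟩

lemma AReach.trans {u a b c : α} (h1 : AReach G u a b) (h2 : AReach G u b c) :
    AReach G u a c := by
  obtain ⟨p, hp⟩ := h1; obtain ⟨q, hq⟩ := h2
  refine ⟨p.append q, ?_⟩
  rw [Walk.mem_support_append_iff]; tauto

lemma AReach.ne_left {u a b : α} (h : AReach G u a b) : a ≠ u := by
  obtain ⟨p, hp⟩ := h; rintro rfl; exact hp p.start_mem_support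

lemma AReach.ne_right {u a b : α} (h : AReach G u a b) : b ≠ u := by
  obtain ⟨p, hp⟩ := h; rintro rfl; exact hp p.end_mem_support

lemma exists_walk_of_induce {s : Set α} {a b : s} (p : (G.induce s).Walk a b) :
    ∃ q : G.Walk a.1 b.1, ∀ x ∈ q.support, x ∈ s := by
  induction p with
  | nil => exact ⟨Walk.nil, by rintro x hx; simp at hx; subst hx; exact Subtype.coe_prop _⟩
  | @cons a c b h p ih =>
    obtain ⟨q, hq⟩ := ih
    refine ⟨Walk.cons (show G.Adj a.1 c.1 from h) q, ?_⟩
    intro x hx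
    rw [Walk.support_cons, List.mem_cons] at hx
    rcases hx with rfl | hx
    · exact a.2
    · exact hq x hx

lemma areach_of_induce_preconnected {s : Set α} (h : (G.induce s).Preconnected)
    {a b u : α} (ha : a ∈ s) (hb : b ∈ s) (hu : u ∉ s) : AReach G u a b := by
  obtain ⟨p⟩ := h ⟨a, ha⟩ ⟨b, hb⟩
  obtain ⟨q, hq⟩ := exists_walk_of_induce p
  exact ⟨q, fun hm => hu (hq u hm)⟩

lemma not_end_mem_takeUntil {u w x : α} {p : G.Walk w u} (hp : p.IsPath)
    (hx : x ∈ p.support) (hxu : x ≠ u) : u ∉ (p.takeUntil x hx).support := by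
  intro hu
  have hspec := p.take_spec hx
  have hnd := hp.support_nodup
  rw [← hspec, Walk.support_append, List.nodup_append] at hnd
  have h2 : u ∈ (p.dropUntil x hx).support.tail := by
    have he := (p.dropUntil x hx).end_mem_support
    rw [Walk.support_eq_cons (p.dropUntil x hx)] at he
    rcases List.mem_cons.mp he with h | h
    · exact absurd h.symm hxu
    · exact h
  exact hnd.2.2 u hu u h2 rfl

lemma areach_dichotomy (hG : G.Preconnected) {u u₁ w : α}
    (huu : u ≠ u₁) (hwu : w ≠ u) (hwu₁ : w ≠ u₁) :
    AReach G u u₁ w ∨ AReach G u₁ u w := by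
  obtain ⟨q⟩ := hG w u
  by_cases h1 : u₁ ∈ q.toPath.1.support
  · left
    have hnot := not_end_mem_takeUntil q.toPath.2 h1 (Ne.symm huu)
    exact ⟨(q.toPath.1.takeUntil u₁ h1).reverse, by
      simpa [Walk.support_reverse] using hnot⟩
  · right
    exact ⟨q.toPath.1.reverse, by simpa [Walk.support_reverse] using h1⟩

lemma not_both_areach (hA : G.IsAcyclic) {u u₁ w : α} (hadj : G.Adj u u₁)
    (h1 : AReach G u u₁ w) (h2 : AReach G u₁ u w) : False := by
  obtain ⟨p, hp⟩ := h1  -- p : Walk u₁ w, u ∉ support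
  obtain ⟨q, hq⟩ := h2  -- q : Walk u w, u₁ ∉ support
  set c : G.Walk u u₁ := q.append p.reverse with hc
  have hedge : s(u, u₁) ∉ c.edges := by
    intro he
    rw [hc, Walk.edges_append, List.mem_append] at he
    rcases he with he | he
    · exact hq (Walk.snd_mem_support_of_mem_edges q he)
    · rw [Walk.edges_reverse, List.mem_reverse] at he
      exact hp (Walk.fst_mem_support_of_mem_edges p he)
  have heq := (isAcyclic_iff_path_unique.mp hA)
    (⟨Walk.cons hadj Walk.nil, by simp [hadj.ne]⟩ : G.Path u u₁) c.toPath
  have : s(u, u₁) ∈ c.toPath.1.edges := by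
    rw [← heq]; simp
  exact hedge (Walk.edges_bypass_subset _ this)

lemma exists_adj_areach_aux {u a : α} (p : G.Walk u a) (hp : p.IsPath) (hua : u ≠ a) :
    ∃ u₁, G.Adj u u₁ ∧ AReach G u a u₁ := by
  cases p with
  | nil => exact absurd rfl hua
  | cons h q =>
    rw [Walk.cons_isPath_iff] at hp
    exact ⟨_, h, ⟨q.reverse, by simpa [Walk.support_reverse] using hp.2⟩⟩

lemma exists_adj_areach (hG : G.Preconnected) {u a : α} (hua : u ≠ a) :
    ∃ u₁, G.Adj u u₁ ∧ AReach G u a u₁ := by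
  obtain ⟨w⟩ := hG u a
  exact exists_adj_areach_aux w.toPath.1 w.toPath.2 hua

end BalSep

/-- In every GHD of `H` there is a node `u` whose label `λ_u` is a balanced separator:
every connected component `C` of the subhypergraph of `H` induced on `V(H) \ B(λ_u)`
satisfies `|{e ∈ E(H) : e ∩ C ≠ ∅}| ≤ |E(H)| / 2`. -/
theorem exists_balanced_separator (H : HGraph V) (D : Decomp V) (hD : D.IsGHD H) :
    ∃ u : Fin D.n, ∀ C : Finset V,
      IsComponent H (H.verts \ (D.cover u).biUnion id) C →
      ((H.edges.filter fun e => (e ∩ C).Nonempty).card : ℚ) ≤ (H.edges.card : ℚ) / 2 := by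
  classical
  by_contra hcon
  push_neg at hcon
  obtain ⟨hTree, hCov, hVC, hSub, hBag⟩ := hD
  have hPre : D.tree.Preconnected := hTree.isConnected.preconnected
  have hAcy : D.tree.IsAcyclic := hTree.IsAcyclic
  haveI : Nonempty (Fin D.n) := hTree.isConnected.nonempty
  set m := H.edges.card with hm
  set W : Fin D.n → Finset V := fun u => H.verts \ (D.cover u).biUnion id with hWdef
  choose C hC hheavy using hcon
  have hCW : ∀ u, C u ⊆ W u := fun u => (hC u).2.1
  have hCconn : ∀ u, ∀ x ∈ C u, ∀ y ∈ C u, HConn H (W u) x y := fun u => (hC u).2.2.1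
  have hnotbag : ∀ u, ∀ v, v ∈ W u → v ∉ D.bag u := by
    intro u v hv hb
    exact (Finset.mem_sdiff.mp hv).2 (hBag u hb)
  -- all bags containing vertices of `C u` are reachable from each other avoiding `u`
  have bagReach : ∀ u, ∀ v ∈ C u, ∀ v' ∈ C u, ∀ w w', v ∈ D.bag w → v' ∈ D.bag w' →
      BalSep.AReach D.tree u w w' := by
    intro u v hv v' hv'
    have hcc : Relation.ReflTransGen
        (fun a b => a ∈ W u ∧ b ∈ W u ∧ ∃ e ∈ H.edges, a ∈ e ∧ b ∈ e) v v' :=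
      hCconn u v hv v' hv'
    clear hv'
    induction hcc with
    | refl =>
      intro w w' hw hw'
      exact BalSep.areach_of_induce_preconnected (hVC v) hw hw' (hnotbag u v (hCW u hv))
    | @tail b c hab hbc ih =>
      intro w w' hw hw'
      obtain ⟨hbW, hcW, e, he, hbe, hce⟩ := hbc
      obtain ⟨w₀, hw₀⟩ := hCov e he
      exact (ih w w₀ hw (hw₀ hbe)).trans
        (BalSep.areach_of_induce_preconnected (hVC c) (hw₀ hce) hw' (hnotbag u c hcW))
  -- anchors
  have hanch : ∀ u, ∃ a : Fin D.n, ∃ x, x ∈ C u ∧ x ∈ D.bag a := by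
    intro u
    have h1 := hheavy u
    have h2 : (0:ℚ) ≤ (m:ℚ)/2 := by positivity
    have h3 : 0 < (H.edges.filter fun e => (e ∩ C u).Nonempty).card := by
      exact_mod_cast lt_of_le_of_lt h2 h1
    obtain ⟨e, he⟩ := Finset.card_pos.mp h3
    rw [Finset.mem_filter] at he
    obtain ⟨x, hx⟩ := he.2
    rw [Finset.mem_inter] at hx
    obtain ⟨a, ha⟩ := hCov e he.1
    exact ⟨a, x, hx.2, ha hx.1⟩
  choose anch v₀ hv₀C hv₀bag using hanch
  set S : Fin D.n → Finset (Fin D.n) :=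
    fun u => Finset.univ.filter (fun w => BalSep.AReach D.tree u (anch u) w) with hSdef
  have hmemS : ∀ u w, w ∈ S u ↔ BalSep.AReach D.tree u (anch u) w := by
    intro u w; simp [hSdef]
  have hcovS : ∀ u, ∀ e ∈ H.edges, (e ∩ C u).Nonempty → ∀ w, e ⊆ D.bag w → w ∈ S u := by
    intro u e he hne w hw
    obtain ⟨v, hv⟩ := hne
    rw [Finset.mem_inter] at hv
    rw [hmemS]
    exact bagReach u (v₀ u) (hv₀C u) v hv.2 (anch u) w (hv₀bag u) (hw hv.1)
  have hanchne : ∀ u, u ≠ anch u := by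
    intro u h
    have hb := hv₀bag u
    rw [← h] at hb
    exact hnotbag u (v₀ u) (hCW u (hv₀C u)) hb
  -- minimize |S u|
  obtain ⟨u, -, hmin⟩ := Finset.exists_min_image Finset.univ (fun u => (S u).card)
    Finset.univ_nonempty
  obtain ⟨u₁, hadj, har⟩ := BalSep.exists_adj_areach hPre (hanchne u)
  have hu₁S : u₁ ∈ S u := (hmemS u u₁).mpr har
  by_cases hcase : u ∈ S u₁
  · -- two disjoint heavy families of edges: contradiction
    have hdisj : Disjoint (H.edges.filter fun e => (e ∩ C u).Nonempty)
        (H.edges.filter fun e => (e ∩ C u₁).Nonempty) := by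
      rw [Finset.disjoint_left]
      intro e he1 he2
      rw [Finset.mem_filter] at he1 he2
      obtain ⟨w₀, hw₀⟩ := hCov e he1.1
      have h1 := (hmemS u w₀).mp (hcovS u e he1.1 he1.2 w₀ hw₀)
      have h2 := (hmemS u₁ w₀).mp (hcovS u₁ e he1.1 he2.2 w₀ hw₀)
      have hA1 : BalSep.AReach D.tree u u₁ w₀ := ((hmemS u u₁).mp hu₁S).symm.trans h1
      have hA2 : BalSep.AReach D.tree u₁ u w₀ := ((hmemS u₁ u).mp hcase).symm.trans h2
      exact BalSep.not_both_areach hAcy hadj hA1 hA2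
    have hle : (H.edges.filter fun e => (e ∩ C u).Nonempty).card +
        (H.edges.filter fun e => (e ∩ C u₁).Nonempty).card ≤ m := by
      rw [← Finset.card_union_of_disjoint hdisj]
      refine Finset.card_le_card ?_
      intro e he
      rw [Finset.mem_union] at he
      rcases he with h | h
      · exact (Finset.mem_filter.mp h).1
      · exact (Finset.mem_filter.mp h).1
    have h1 := hheavy u
    have h2 := hheavy u₁
    have h3 : ((H.edges.filter fun e => (e ∩ C u).Nonempty).card : ℚ) +
        ((H.edges.filter fun e => (e ∩ C u₁).Nonempty).card : ℚ) ≤ (m : ℚ) := by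
      exact_mod_cast hle
    linarith
  · -- strictly smaller side: contradiction with minimality
    have hssub : S u₁ ⊂ S u := by
      constructor
      · intro w hw
        rw [hmemS] at hw ⊢
        have hwne1 : w ≠ u₁ := hw.ne_right
        have hwne : w ≠ u := by
          rintro rfl
          exact hcase ((hmemS u₁ w).mpr hw)
        rcases BalSep.areach_dichotomy hPre hadj.ne hwne hwne1 with h | h
        · exact har.trans h
        · exact absurd ((hmemS u₁ u).mpr (hw.trans h.symm)) hcase
      · intro hsub
        exact ((hmemS u₁ u₁).mp (hsub hu₁S)).ne_right rfl
    exact absurd (hmin u₁ (Finset.mem_univ u₁))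
      (not_le.mpr (Finset.card_lt_card hssub))
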